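/- Let v1,v2,v3,v4 ∈ ℝ² form a convex quadrilateral in counterclockwise cyclic order, let Q be their convex hull, and let p lie in the interior of Q. Then the Wachspress coordinates satisfy ρ1(p)·φ1(p) − ρ2(p)·φ2(p) + ρ3(p)·φ3(p) − ρ4(p)·φ4(p) = 0. -/

import Mathlib

open Matrix

/-- Signed area of the triangle `(a,b,c)` in the plane. -/
noncomputable def sArea (a b c : EuclideanSpace ℝ (Fin 2)) : ℝ :=
  ((b 0 - a 0) * (c 1 - a 1) - (b 1 - a 1) * (c 0 - a 0)) / 2

/-- `v` lists the vertices of a convex quadrilateral in counterclockwise cyclic order. -/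
def ConvexCCW (v : Fin 4 → EuclideanSpace ℝ (Fin 2)) : Prop :=
  ∀ i : Fin 4, 0 < sArea (v i) (v (i + 1)) (v (i + 2))

/-- `hdist v i p`: Euclidean distance from `p` to the line through `v i` and `v (i+1)`. -/
noncomputable def hdist (v : Fin 4 → EuclideanSpace ℝ (Fin 2)) (i : Fin 4)
    (p : EuclideanSpace ℝ (Fin 2)) : ℝ :=
  Metric.infDist p (affineSpan ℝ {v i, v (i + 1)} : Set (EuclideanSpace ℝ (Fin 2)))

/-- `ρᵢ(p) = l_{i,i-1} l_{i,i+1} h_{i-1}(p) h_i(p)`. -/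
noncomputable def rho (v : Fin 4 → EuclideanSpace ℝ (Fin 2)) (i : Fin 4)
    (p : EuclideanSpace ℝ (Fin 2)) : ℝ :=
  ‖v i - v (i - 1)‖ * ‖v i - v (i + 1)‖ * hdist v (i - 1) p * hdist v i p

/-- Wachspress weight `wᵢ(p) = S(v_{i-1},v_i,v_{i+1}) / (S(p,v_{i-1},v_i) S(p,v_i,v_{i+1}))`. -/
noncomputable def wWach (v : Fin 4 → EuclideanSpace ℝ (Fin 2)) (i : Fin 4)
    (p : EuclideanSpace ℝ (Fin 2)) : ℝ :=
  sArea (v (i - 1)) (v i) (v (i + 1)) /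
    (sArea p (v (i - 1)) (v i) * sArea p (v i) (v (i + 1)))

/-- Wachspress coordinate `φᵢ(p) = wᵢ(p) / (w₁(p)+w₂(p)+w₃(p)+w₄(p))`. -/
noncomputable def wach (v : Fin 4 → EuclideanSpace ℝ (Fin 2)) (i : Fin 4)
    (p : EuclideanSpace ℝ (Fin 2)) : ℝ :=
  wWach v i p / (wWach v 0 p + wWach v 1 p + wWach v 2 p + wWach v 3 p)

lemma norm_eq_two (x : EuclideanSpace ℝ (Fin 2)) : ‖x‖ = Real.sqrt ((x 0)^2 + (x 1)^2) := by
  rw [EuclideanSpace.norm_eq, Fin.sum_univ_two]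
  simp [Real.norm_eq_abs, sq_abs]

lemma sArea_cyc (a b c : EuclideanSpace ℝ (Fin 2)) : sArea a b c = sArea c a b := by
  unfold sArea; ring

lemma sArea_self (a c : EuclideanSpace ℝ (Fin 2)) : sArea a a c = 0 := by
  unfold sArea; ring

lemma infDist_line (a b p : EuclideanSpace ℝ (Fin 2)) (hab : a ≠ b) :
    Metric.infDist p (affineSpan ℝ {a, b} : Set (EuclideanSpace ℝ (Fin 2)))
      = |(b 0 - a 0) * (p 1 - a 1) - (b 1 - a 1) * (p 0 - a 0)| / ‖b - a‖ := by
  set u0 := b 0 - a 0 with hu0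
  set u1 := b 1 - a 1 with hu1
  have hL2 : 0 < u0^2 + u1^2 := by
    rcases (lt_or_ge 0 (u0^2 + u1^2)) with h | h
    · exact h
    · exfalso; apply hab
      have h0 : u0 = 0 := by nlinarith [sq_nonneg u0, sq_nonneg u1]
      have h1 : u1 = 0 := by nlinarith [sq_nonneg u0, sq_nonneg u1]
      ext i; fin_cases i
      · show a 0 = b 0; rw [hu0] at h0; linarith
      · show a 1 = b 1; rw [hu1] at h1; linarith
  have hnorm : ‖b - a‖ = Real.sqrt (u0^2 + u1^2) := by
    rw [norm_eq_two]
    simp [PiLp.sub_apply, hu0, hu1]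
  set det := u0 * (p 1 - a 1) - u1 * (p 0 - a 0) with hdet
  have hsne : (affineSpan ℝ ({a, b} : Set (EuclideanSpace ℝ (Fin 2))) : Set _).Nonempty :=
    ⟨a, by exact left_mem_affineSpan_pair ℝ a b⟩
  have coord : ∀ (t : ℝ) (i : Fin 2), (t • (b -ᵥ a) +ᵥ a : EuclideanSpace ℝ (Fin 2)) i
      = a i + t * (b i - a i) := by
    intro t i
    simp [vsub_eq_sub, vadd_eq_add, PiLp.add_apply, PiLp.smul_apply, PiLp.sub_apply]
    ring
  have distform : ∀ (t : ℝ), dist p (t • (b -ᵥ a) +ᵥ a : EuclideanSpace ℝ (Fin 2))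
      = Real.sqrt ((p 0 - (a 0 + t * u0))^2 + (p 1 - (a 1 + t * u1))^2) := by
    intro t
    rw [EuclideanSpace.dist_eq, Fin.sum_univ_two, coord t 0, coord t 1, hu0, hu1]
    simp [Real.dist_eq, sq_abs]
  apply le_antisymm
  · -- infDist ≤ D via the foot of perpendicular
    set t0 := (u0 * (p 0 - a 0) + u1 * (p 1 - a 1)) / (u0^2 + u1^2) with ht0
    have hmem : (t0 • (b -ᵥ a) +ᵥ a : EuclideanSpace ℝ (Fin 2)) ∈
        (affineSpan ℝ ({a, b} : Set (EuclideanSpace ℝ (Fin 2))) : Set _) :=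
      smul_vsub_vadd_mem_affineSpan_pair t0 a b
    refine le_trans (Metric.infDist_le_dist_of_mem hmem) ?_
    rw [distform t0, hnorm]
    have hW : (p 0 - (a 0 + t0 * u0))^2 + (p 1 - (a 1 + t0 * u1))^2
        = det^2 / (u0^2 + u1^2) := by
      rw [ht0, hdet]
      field_simp
      ring
    rw [hW, Real.sqrt_div (sq_nonneg det), Real.sqrt_sq_eq_abs]
  · by_contra hcon
    push_neg at hcon
    obtain ⟨q, hq, hlt⟩ := (Metric.infDist_lt_iff hsne).mp hcon
    refine absurd hlt (not_lt.mpr ?_)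
    have hmem : (q -ᵥ a) +ᵥ a ∈ affineSpan ℝ ({a, b} : Set (EuclideanSpace ℝ (Fin 2))) := by
      simpa using hq
    rw [vadd_left_mem_affineSpan_pair] at hmem
    obtain ⟨t, ht⟩ := hmem
    have hq' : q = t • (b -ᵥ a) +ᵥ a := by
      rw [ht]; simp
    rw [hq', distform t, hnorm]
    rw [div_le_iff₀ (Real.sqrt_pos.mpr hL2), ← Real.sqrt_mul (by positivity)]
    rw [← Real.sqrt_sq_eq_abs]
    apply Real.sqrt_le_sqrt
    rw [hdet]
    nlinarith [sq_nonneg (u0 * (p 0 - (a 0 + t*u0)) + u1 * (p 1 - (a 1 + t*u1))), sq_nonneg (p 0 - (a 0 + t*u0)), sq_nonneg (p 1 - (a 1 + t*u1))]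

lemma sArea_pos_interior (v : Fin 4 → EuclideanSpace ℝ (Fin 2)) (hccw : ConvexCCW v)
    (p : EuclideanSpace ℝ (Fin 2))
    (hp : p ∈ interior (convexHull ℝ {v 0, v 1, v 2, v 3})) (i : Fin 4) :
    0 < sArea (v i) (v (i + 1)) p := by
  set a := v i with ha
  set b := v (i + 1) with hb
  set u0 := b 0 - a 0 with hu0
  set u1 := b 1 - a 1 with hu1
  have hL2 : 0 < u0 ^ 2 + u1 ^ 2 := by
    rcases lt_or_ge 0 (u0 ^ 2 + u1 ^ 2) with h | h
    · exact h
    · exfalso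
      have h0 : u0 = 0 := by nlinarith [sq_nonneg u0, sq_nonneg u1]
      have h1 : u1 = 0 := by nlinarith [sq_nonneg u0, sq_nonneg u1]
      have := hccw i
      unfold sArea at this
      rw [← ha, ← hb, ← hu0, ← hu1, h0, h1] at this
      norm_num at this
  -- every vertex is on the nonneg side
  have hkey : ∀ j : Fin 4, 0 ≤ sArea a b (v j) := by
    intro j
    obtain ⟨k, hk⟩ : ∃ k : Fin 4, j = i + k := ⟨j - i, by abel⟩
    have hk4 : k = 0 ∨ k = 1 ∨ k = 2 ∨ k = 3 := by omega
    have h31 : ∀ m : Fin 4, m + 3 + 1 = m := by decide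
    have h32 : ∀ m : Fin 4, m + 3 + 2 = m + 1 := by decide
    rcases hk4 with rfl | rfl | rfl | rfl
    · rw [hk, add_zero, ← ha]
      have : sArea a b a = 0 := by unfold sArea; ring
      rw [this]
    · rw [hk, ← hb]
      have : sArea a b b = 0 := by unfold sArea; ring
      rw [this]
    · rw [hk]
      exact le_of_lt (hccw i)
    · rw [hk, sArea_cyc]
      have := hccw (i + 3)
      rw [h31 i, h32 i] at this
      exact le_of_lt this
  have hconv : Convex ℝ {x : EuclideanSpace ℝ (Fin 2) | 0 ≤ sArea a b x} := by
    intro x hx y hy s t hs ht hst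
    simp only [Set.mem_setOf_eq] at hx hy ⊢
    have c0 : (s • x + t • y : EuclideanSpace ℝ (Fin 2)) 0 = s * x 0 + t * y 0 := by
      simp [PiLp.add_apply, PiLp.smul_apply]
    have c1 : (s • x + t • y : EuclideanSpace ℝ (Fin 2)) 1 = s * x 1 + t * y 1 := by
      simp [PiLp.add_apply, PiLp.smul_apply]
    have key : sArea a b (s • x + t • y) = s * sArea a b x + t * sArea a b y := by
      unfold sArea
      rw [c0, c1]
      linear_combination (((b 0 - a 0) * a 1 - (b 1 - a 1) * a 0) / 2) * hst
    rw [key]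
    exact add_nonneg (mul_nonneg hs hx) (mul_nonneg ht hy)
  have hhull : convexHull ℝ ({v 0, v 1, v 2, v 3} : Set (EuclideanSpace ℝ (Fin 2)))
      ⊆ {x | 0 ≤ sArea a b x} := by
    apply convexHull_min _ hconv
    intro x hx
    simp only [Set.mem_insert_iff, Set.mem_singleton_iff] at hx
    rcases hx with h | h | h | h <;> (rw [h]; exact hkey _)
  obtain ⟨ε, hε, hball⟩ := Metric.isOpen_iff.mp isOpen_interior p hp
  by_contra hcon
  push_neg at hcon
  set d : EuclideanSpace ℝ (Fin 2) := WithLp.toLp 2 ![u1, -u0] with hd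
  have hd0 : d 0 = u1 := rfl
  have hd1 : d 1 = -u0 := rfl
  have hsq : 0 < Real.sqrt (u0 ^ 2 + u1 ^ 2) := Real.sqrt_pos.mpr hL2
  set s := ε / (2 * Real.sqrt (u0 ^ 2 + u1 ^ 2)) with hs
  have hspos : 0 < s := by positivity
  set q : EuclideanSpace ℝ (Fin 2) := p + s • d with hq
  have hqball : q ∈ Metric.ball p ε := by
    rw [Metric.mem_ball, dist_eq_norm]
    have : q - p = s • d := by rw [hq]; abel
    rw [this, norm_smul]
    have hnd : ‖d‖ = Real.sqrt (u0 ^ 2 + u1 ^ 2) := by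
      rw [EuclideanSpace.norm_eq, Fin.sum_univ_two, hd0, hd1]
      simp [Real.norm_eq_abs, sq_abs]
      ring_nf
    rw [hnd, Real.norm_eq_abs, abs_of_pos hspos, hs]
    rw [div_mul_eq_mul_div, mul_comm]
    rw [div_lt_iff₀ (by positivity)]
    nlinarith [hsq, hε]
  have hq0 : q 0 = p 0 + s * u1 := by
    rw [hq]; simp [PiLp.add_apply, PiLp.smul_apply, hd0]
  have hq1 : q 1 = p 1 - s * u0 := by
    rw [hq]; simp [PiLp.add_apply, PiLp.smul_apply, hd1]; ring
  have hqhull : 0 ≤ sArea a b q := hhull (interior_subset (hball hqball))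
  unfold sArea at hqhull hcon
  rw [hq0, hq1, ← hu0, ← hu1] at hqhull
  rw [← hu0, ← hu1] at hcon
  have hfin := mul_pos hspos hL2
  clear_value s u0 u1 q d
  nlinarith [hfin]

/-- For `p` in the interior of a convex quadrilateral
(counterclockwise order), the Wachspress coordinates satisfy
`ρ₁(p)φ₁(p) - ρ₂(p)φ₂(p) + ρ₃(p)φ₃(p) - ρ₄(p)φ₄(p) = 0`. -/
theorem wachspress_moment_condition (v : Fin 4 → EuclideanSpace ℝ (Fin 2))
    (hccw : ConvexCCW v) (p : EuclideanSpace ℝ (Fin 2))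
    (hp : p ∈ interior (convexHull ℝ {v 0, v 1, v 2, v 3})) :
    rho v 0 p * wach v 0 p - rho v 1 p * wach v 1 p +
      rho v 2 p * wach v 2 p - rho v 3 p * wach v 3 p = 0 := by
  have hS : ∀ i : Fin 4, 0 < sArea p (v i) (v (i + 1)) := by
    intro i
    rw [← sArea_cyc]
    exact sArea_pos_interior v hccw p hp i
  have hne : ∀ i : Fin 4, v i ≠ v (i + 1) := by
    intro i h
    have h2 := hccw i
    rw [h] at h2
    have : sArea (v (i + 1)) (v (i + 1)) (v (i + 2)) = 0 := by unfold sArea; ring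
    rw [this] at h2
    exact lt_irrefl _ h2
  have hdist_eq : ∀ i : Fin 4, hdist v i p
      = (2 * sArea p (v i) (v (i + 1))) / ‖v (i + 1) - v i‖ := by
    intro i
    unfold hdist
    rw [infDist_line _ _ _ (hne i)]
    congr 1
    have heq : (v (i+1) 0 - v i 0) * (p 1 - v i 1) - (v (i+1) 1 - v i 1) * (p 0 - v i 0)
        = 2 * sArea p (v i) (v (i + 1)) := by unfold sArea; ring
    rw [heq, abs_of_pos (by have := hS i; linarith)]
  have e1 : ∀ j : Fin 4, j - 1 + 1 = j := by decide
  have hrw : ∀ i : Fin 4, rho v i p * wWach v i p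
      = 4 * sArea (v (i - 1)) (v i) (v (i + 1)) := by
    intro i
    have hn1 : ‖v i - v (i - 1)‖ ≠ 0 := by
      rw [norm_ne_zero_iff, sub_ne_zero]
      intro h
      exact hne (i - 1) (by rw [e1 i]; exact h.symm)
    have hn2 : ‖v (i + 1) - v i‖ ≠ 0 := by
      rw [norm_ne_zero_iff, sub_ne_zero]
      exact fun h => hne i h.symm
    have hS1 := hS (i - 1)
    rw [e1 i] at hS1
    have hS2 := hS i
    have hd1 := hdist_eq (i - 1)
    rw [e1 i] at hd1
    have hd2 := hdist_eq i
    unfold rho wWach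
    rw [hd1, hd2, norm_sub_rev (v i) (v (i + 1))]
    field_simp
    ring
  have hmul : ∀ i : Fin 4, rho v i p * wach v i p
      = (4 * sArea (v (i - 1)) (v i) (v (i + 1)))
        / (wWach v 0 p + wWach v 1 p + wWach v 2 p + wWach v 3 p) := by
    intro i
    unfold wach
    rw [← mul_div_assoc, hrw i]
  rw [hmul 0, hmul 1, hmul 2, hmul 3]
  rw [div_sub_div_same, ← add_div, div_sub_div_same]
  have hz : 4 * sArea (v (0 - 1)) (v 0) (v (0 + 1)) - 4 * sArea (v (1 - 1)) (v 1) (v (1 + 1))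
      + 4 * sArea (v (2 - 1)) (v 2) (v (2 + 1)) - 4 * sArea (v (3 - 1)) (v 3) (v (3 + 1)) = 0 := by
    have c0 : (0 : Fin 4) - 1 = 3 := rfl
    have c1 : (0 : Fin 4) + 1 = 1 := rfl
    have c2 : (1 : Fin 4) - 1 = 0 := rfl
    have c3 : (1 : Fin 4) + 1 = 2 := rfl
    have c4 : (2 : Fin 4) - 1 = 1 := rfl
    have c5 : (2 : Fin 4) + 1 = 3 := rfl
    have c6 : (3 : Fin 4) - 1 = 2 := rfl
    have c7 : (3 : Fin 4) + 1 = 0 := rfl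
    rw [c0, c1, c2, c3, c4, c5, c6, c7]
    unfold sArea
    ring
  rw [hz, zero_div]
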